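/- arXiv:1207.0430 — 2 statements merged into one kernel-verified Lean document; each statement's English description precedes it below -/
import Mathlib

section
/- (Worpitzky's identity) For every positive integer n and every positive integer x, x^n = ∑_{k=0}^{n-1} A_{n,k} · C(x+k, n), where C denotes the binomial coefficient. -/
open scoped Classical

/-- Number of ascents of a permutation of `Fin n`:
positions `j` with `j + 1 < n` and `π j < π (j+1)`. -/
noncomputable def ascentCount {n : ℕ} (π : Equiv.Perm (Fin n)) : ℕ :=
  ((Finset.range (n - 1)).filter (fun j =>
    ∃ h : j + 1 < n, π ⟨j, Nat.lt_of_succ_lt h⟩ < π ⟨j + 1, h⟩)).card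

/-- The Eulerian number `A_{n,k}`: the number of permutations of an `n`-element
linearly ordered set with exactly `k` ascents. -/
noncomputable def eulerian (n k : ℕ) : ℕ :=
  (Finset.univ.filter (fun π : Equiv.Perm (Fin n) => ascentCount π = k)).card

/-- The `n`-th Eulerian polynomial `A_n(t) = ∑_{k=0}^{n-1} A_{n,k} t^k`, with `A_0(t) = 1`. -/
noncomputable def eulerianPoly (n : ℕ) (t : ℝ) : ℝ :=
  if n = 0 then 1 else ∑ k ∈ Finset.range n, (eulerian n k : ℝ) * t ^ k

namespace WAux

variable {m x : ℕ}

/-- The set of ascent positions of a permutation of `Fin (m+1)`. -/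
noncomputable def ascSet (σ : Equiv.Perm (Fin (m + 1))) : Finset ℕ :=
  ((Finset.range (m + 1 - 1)).filter (fun j =>
    ∃ h : j + 1 < m + 1, σ ⟨j, Nat.lt_of_succ_lt h⟩ < σ ⟨j + 1, h⟩))

lemma ascentCount_eq (σ : Equiv.Perm (Fin (m + 1))) : ascentCount σ = (ascSet σ).card := rfl

lemma mem_ascSet {σ : Equiv.Perm (Fin (m + 1))} {j : ℕ} (hj : j < m) :
    j ∈ ascSet σ ↔ σ ⟨j, by omega⟩ < σ ⟨j + 1, by omega⟩ := by
  simp only [ascSet, Finset.mem_filter, Finset.mem_range]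
  constructor
  · rintro ⟨-, h, hlt⟩; exact hlt
  · intro h; exact ⟨by omega, by omega, h⟩

lemma ascSet_subset_range (σ : Equiv.Perm (Fin (m + 1))) :
    ascSet σ ⊆ Finset.range m := by
  intro j hj
  simpa using (Finset.mem_filter.mp hj).1

/-- number of ascents below `i` -/
noncomputable def acount (σ : Equiv.Perm (Fin (m + 1))) (i : ℕ) : ℕ :=
  ((ascSet σ).filter (· < i)).card

lemma acount_le_card (σ : Equiv.Perm (Fin (m + 1))) (i : ℕ) :
    acount σ i ≤ (ascSet σ).card :=
  Finset.card_filter_le _ _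

lemma acount_mono (σ : Equiv.Perm (Fin (m + 1))) {i j : ℕ} (hij : i ≤ j) :
    acount σ i ≤ acount σ j := by
  apply Finset.card_le_card
  intro p hp
  simp only [Finset.mem_filter] at hp ⊢
  exact ⟨hp.1, lt_of_lt_of_le hp.2 hij⟩

lemma acount_le (σ : Equiv.Perm (Fin (m + 1))) (i : ℕ) : acount σ i ≤ i := by
  have : (ascSet σ).filter (· < i) ⊆ Finset.range i := by
    intro j hj
    simp only [Finset.mem_filter] at hj
    simpa using hj.2
  simpa [acount] using Finset.card_le_card this

lemma card_le_acount_add (σ : Equiv.Perm (Fin (m + 1))) (i : ℕ) :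
    (ascSet σ).card ≤ acount σ i + (m - i) := by
  have h1 : ((ascSet σ).filter (· < i)).card + ((ascSet σ).filter (fun j => ¬ j < i)).card
      = (ascSet σ).card := Finset.card_filter_add_card_filter_not _
  have h2 : (ascSet σ).filter (fun j => ¬ j < i) ⊆ Finset.Ico i m := by
    intro j hj
    simp only [Finset.mem_filter, not_lt] at hj
    have := ascSet_subset_range σ hj.1
    simp only [Finset.mem_range] at this
    simp only [Finset.mem_Ico]
    exact ⟨hj.2, this⟩
  have h3 := Finset.card_le_card h2
  rw [Nat.card_Ico] at h3
  unfold acount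
  omega

lemma acount_succ_of_mem {σ : Equiv.Perm (Fin (m + 1))} {i : ℕ} (hi : i ∈ ascSet σ) :
    acount σ (i + 1) = acount σ i + 1 := by
  have : (ascSet σ).filter (· < i + 1) = insert i ((ascSet σ).filter (· < i)) := by
    ext j
    simp only [Finset.mem_filter, Finset.mem_insert]
    constructor
    · rintro ⟨hj, hlt⟩
      rcases Nat.lt_succ_iff_lt_or_eq.mp hlt with h | h
      · exact Or.inr ⟨hj, h⟩
      · exact Or.inl h
    · rintro (rfl | ⟨hj, hlt⟩)
      · exact ⟨hi, Nat.lt_succ_self _⟩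
      · exact ⟨hj, Nat.lt_succ_of_lt hlt⟩
  unfold acount
  rw [this, Finset.card_insert_of_notMem (by simp)]

lemma acount_succ_of_not_mem {σ : Equiv.Perm (Fin (m + 1))} {i : ℕ} (hi : i ∉ ascSet σ) :
    acount σ (i + 1) = acount σ i := by
  unfold acount
  congr 1
  ext j
  simp only [Finset.mem_filter]
  constructor
  · rintro ⟨hj, hlt⟩
    refine ⟨hj, ?_⟩
    rcases Nat.lt_succ_iff_lt_or_eq.mp hlt with h | rfl
    · exact h
    · exact absurd hj hi
  · rintro ⟨hj, hlt⟩
    exact ⟨hj, Nat.lt_succ_of_lt hlt⟩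

/-- gap lemma for strictly monotone ℕ-valued functions on `Fin N` -/
lemma gap {N : ℕ} {v : Fin N → ℕ} (hv : StrictMono v) :
    ∀ d (i j : Fin N), i.1 + d = j.1 → v i + d ≤ v j := by
  intro d
  induction d with
  | zero =>
    intro i j hij
    have : i = j := Fin.ext (by omega)
    subst this; simp
  | succ d ih =>
    intro i j hij
    have hlt : i.1 + d < N := by omega
    have h1 := ih i ⟨i.1 + d, hlt⟩ rfl
    have h2 : v ⟨i.1 + d, hlt⟩ < v j := hv (by simp [Fin.lt_def]; omega)
    omega

/-- Characterization of `Tuple.sort f = σ` by consecutive comparisons. -/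
lemma sort_eq_iff {f : Fin (m + 1) → Fin x} {σ : Equiv.Perm (Fin (m + 1))} :
    Tuple.sort f = σ ↔ ∀ i : Fin m,
      f (σ i.castSucc) < f (σ i.succ) ∨
        (f (σ i.castSucc) = f (σ i.succ) ∧ σ i.castSucc < σ i.succ) := by
  rw [eq_comm, Tuple.eq_sort_iff', Fin.strictMono_iff_lt_succ]
  apply forall_congr'
  intro i
  rw [Equiv.trans_apply, Equiv.trans_apply, Subtype.mk_lt_mk]
  exact Prod.Lex.lt_iff (x := toLex (f (σ i.castSucc), σ i.castSucc)) (y := toLex (f (σ i.succ), σ i.succ))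

/-- The number of strictly monotone maps `Fin N → Fin M` is `M.choose N`. -/
lemma card_strictMono (N M : ℕ) :
    (Finset.univ.filter (fun h : Fin N → Fin M => StrictMono h)).card = M.choose N := by
  rw [← Fintype.card_subtype]
  have e : {h : Fin N → Fin M // StrictMono h} ≃ {s : Finset (Fin M) // s.card = N} :=
    { toFun := fun h => ⟨Finset.univ.image h.1, by
        rw [Finset.card_image_of_injective _ h.2.injective, Finset.card_univ, Fintype.card_fin]⟩
      invFun := fun s => ⟨s.1.orderEmbOfFin s.2, (s.1.orderEmbOfFin s.2).strictMono⟩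
      left_inv := fun h => Subtype.ext
        (Finset.orderEmbOfFin_unique _
          (fun i => Finset.mem_image_of_mem _ (Finset.mem_univ i)) h.2).symm
      right_inv := fun s => Subtype.ext (by
        rw [← Finset.coe_inj, Finset.coe_image, Finset.coe_univ, Set.image_univ]
        exact Finset.range_orderEmbOfFin s.1 s.2) }
  rw [Fintype.card_congr e, Fintype.card_finset_len, Fintype.card_fin]

lemma val_strictMono {M : ℕ} {h : Fin (m + 1) → Fin M} (hs : StrictMono h) :
    StrictMono (fun i => (h i).1) := fun a b hab => hs hab

lemma val_le_apply {M : ℕ} {h : Fin (m + 1) → Fin M} (hs : StrictMono h) (i : Fin (m + 1)) :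
    i.1 ≤ (h i).1 := by
  have := gap (val_strictMono hs) i.1 ⟨0, Nat.succ_pos m⟩ i (by simp)
  omega

/-- The main fiber cardinality computation. -/
lemma fiber_card (hx : 1 ≤ x) (σ : Equiv.Perm (Fin (m + 1))) :
    (Finset.univ.filter (fun f : Fin (m + 1) → Fin x => Tuple.sort f = σ)).card
      = (x + (ascSet σ).card).choose (m + 1) := by
  set K := (ascSet σ).card with hKdef
  rw [← card_strictMono (m + 1) (x + K)]
  refine Finset.card_bij'
    (i := fun f _ => fun i : Fin (m + 1) =>
      (⟨(f (σ i)).1 + acount σ i.1, by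
        have h1 := (f (σ i)).2
        have h2 := acount_le_card σ i.1
        omega⟩ : Fin (x + K)))
    (j := fun h hh => fun p : Fin (m + 1) =>
      (⟨(h (σ⁻¹ p)).1 - acount σ (σ⁻¹ p).1, by
        have hs : StrictMono h := (Finset.mem_filter.mp hh).2
        set i : Fin (m + 1) := σ⁻¹ p
        have h1 := gap (val_strictMono hs) (m - i.1) i ⟨m, Nat.lt_succ_self m⟩ (by simp; omega)
        have h2 := (h ⟨m, Nat.lt_succ_self m⟩).2
        have h3 := card_le_acount_add σ i.1
        have h4 := i.2
        omega⟩ : Fin x))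
    ?_ ?_ ?_ ?_
  · -- forward map lands in strictly monotone maps
    intro f hf
    simp only [Finset.mem_filter, Finset.mem_univ, true_and] at hf ⊢
    rw [Fin.strictMono_iff_lt_succ]
    intro i
    rw [Fin.lt_def]
    simp only [Fin.coe_castSucc, Fin.val_succ]
    have hcase := sort_eq_iff.mp hf i
    have hmono : acount σ i.1 ≤ acount σ (i.1 + 1) := acount_mono σ (Nat.le_succ _)
    rcases hcase with hlt | ⟨heq, hσ⟩
    · rw [Fin.lt_def] at hlt
      omega
    · have hmem : (i : ℕ) ∈ ascSet σ := by
        rw [mem_ascSet i.2]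
        exact hσ
      have := acount_succ_of_mem hmem
      have heqv : (f (σ i.castSucc)).1 = (f (σ i.succ)).1 := congrArg Fin.val heq
      omega
  · -- backward map lands in the fiber
    intro h hh
    have hs : StrictMono h := (Finset.mem_filter.mp hh).2
    simp only [Finset.mem_filter, Finset.mem_univ, true_and]
    rw [sort_eq_iff]
    intro i
    simp only [Equiv.Perm.coe_inv, Equiv.symm_apply_apply]
    set u := (h i.castSucc).1 with hu
    set u' := (h i.succ).1 with hu'
    have huu : u < u' := hs (Fin.castSucc_lt_succ (i := i))
    have hau : acount σ (i : ℕ) ≤ u := le_trans (acount_le σ (i : ℕ)) (val_le_apply hs i.castSucc)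
    have hcs : i.castSucc.1 = i.1 := rfl
    have hss : i.succ.1 = i.1 + 1 := rfl
    by_cases hmem : (i : ℕ) ∈ ascSet σ
    · have ha := acount_succ_of_mem hmem
      have hσ : σ i.castSucc < σ i.succ := (mem_ascSet i.2).mp hmem
      have hle : u - acount σ i.castSucc.1 ≤ u' - acount σ i.succ.1 := by
        rw [hcs, hss, ha]; omega
      rcases eq_or_lt_of_le hle with he | hl
      · exact Or.inr ⟨Fin.ext he, hσ⟩
      · exact Or.inl (Fin.lt_def.mpr hl)
    · have ha := acount_succ_of_not_mem hmem
      refine Or.inl (Fin.lt_def.mpr ?_)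
      simp only []
      rw [hcs, hss, ha]
      omega
  · -- left inverse
    intro f hf
    funext p
    apply Fin.ext
    simp only [Equiv.Perm.coe_inv, Equiv.apply_symm_apply]
    omega
  · -- right inverse
    intro h hh
    have hs : StrictMono h := (Finset.mem_filter.mp hh).2
    funext i
    apply Fin.ext
    simp only [Equiv.Perm.coe_inv, Equiv.symm_apply_apply]
    have hau : acount σ i.1 ≤ (h i).1 := le_trans (acount_le σ _) (val_le_apply hs _)
    omega

lemma ascentCount_le (σ : Equiv.Perm (Fin (m + 1))) : ascentCount σ ≤ m := by
  rw [ascentCount_eq]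
  calc (ascSet σ).card ≤ (Finset.range m).card := Finset.card_le_card (ascSet_subset_range σ)
  _ = m := Finset.card_range m

end WAux

/-- Worpitzky's identity: `x^n = ∑_{k=0}^{n-1} A_{n,k} C(x+k, n)`. -/
theorem worpitzky (n x : ℕ) (hn : 1 ≤ n) (hx : 1 ≤ x) :
    x ^ n = ∑ k ∈ Finset.range n, eulerian n k * Nat.choose (x + k) n := by
  obtain ⟨m, rfl⟩ : ∃ m, n = m + 1 := ⟨n - 1, by omega⟩
  have h1 : x ^ (m + 1) = (Finset.univ : Finset (Fin (m + 1) → Fin x)).card := by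
    rw [Finset.card_univ, Fintype.card_fun, Fintype.card_fin, Fintype.card_fin]
  rw [h1, Finset.card_eq_sum_card_fiberwise
    (f := fun f => Tuple.sort f) (t := (Finset.univ : Finset (Equiv.Perm (Fin (m + 1)))))
    (fun f _ => Finset.mem_univ _)]
  have h2 : ∀ σ : Equiv.Perm (Fin (m + 1)),
      (Finset.univ.filter (fun f : Fin (m + 1) → Fin x => Tuple.sort f = σ)).card
        = (x + ascentCount σ).choose (m + 1) := by
    intro σ
    rw [WAux.ascentCount_eq]
    exact WAux.fiber_card hx σ
  rw [Finset.sum_congr rfl (fun σ _ => h2 σ)]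
  rw [← Finset.sum_fiberwise_of_maps_to (g := fun σ => ascentCount σ)
    (t := Finset.range (m + 1))
    (fun σ _ => Finset.mem_range.mpr (Nat.lt_succ_of_le (WAux.ascentCount_le σ)))]
  refine Finset.sum_congr rfl (fun k _ => ?_)
  rw [Finset.sum_congr rfl (fun σ hσ => by
    rw [(Finset.mem_filter.mp hσ).2] :
    ∀ σ ∈ Finset.univ.filter (fun σ : Equiv.Perm (Fin (m + 1)) => ascentCount σ = k),
      (x + ascentCount σ).choose (m + 1) = (x + k).choose (m + 1))]
  rw [Finset.sum_const, smul_eq_mul]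
  rfl
end

section
/- Let a, d be real numbers. For every integer n ≥ 0 and every real number t with |t| < 1, the series ∑_{j=0}^∞ t^j (a + jd)^n converges and equals -T_n(t, a-d, -d)/(t-1)^{n+1}, where T_n(t, a-d, -d) is the general Eulerian polynomial associated with the arithmetic progression {a-d, a-2d, a-3d, …}. -/
/-- General Eulerian numbers `A_{n,k}(a,d)` for the arithmetic progression
`a, a+d, a+2d, …`: `A_{0,-1}(a,d) = 1`, `A_{n,k}(a,d) = 0` for `k ≥ n` or `k ≤ -2`, and
`A_{n,k}(a,d) = (-a+(k+2)d) A_{n-1,k}(a,d) + (a+(n-k-1)d) A_{n-1,k-1}(a,d)` for `n ≥ 1`. -/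
noncomputable def genEulerian (a d : ℝ) : ℕ → ℤ → ℝ
  | 0, k => if k = -1 then 1 else 0
  | (n + 1), k =>
      if ((n : ℤ) + 1 ≤ k ∨ k ≤ -2) then 0
      else (-a + ((k : ℝ) + 2) * d) * genEulerian a d n k
        + (a + (((n : ℝ) + 1) - (k : ℝ) - 1) * d) * genEulerian a d n (k - 1)

/-- General Eulerian polynomial `T_n(t,a,d) = ∑_{k=-1}^{n-1} A_{n,k}(a,d) t^{k+1}`
(which equals `1` when `n = 0`). -/
noncomputable def genEulerianPoly (n : ℕ) (t a d : ℝ) : ℝ :=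
  ∑ k ∈ Finset.range (n + 1), genEulerian a d n ((k : ℤ) - 1) * t ^ k

lemma genEulerian_eq_zero (a d : ℝ) (n : ℕ) (k : ℤ) (h : (n:ℤ) ≤ k ∨ k ≤ -2) :
    genEulerian a d n k = 0 := by
  cases n with
  | zero => rw [genEulerian, if_neg (by omega)]
  | succ n => rw [genEulerian, if_pos (by push_cast at h ⊢; omega)]

lemma genEulerian_succ (a d : ℝ) (n : ℕ) (k : ℕ) (hk : k ≤ n + 1) :
    genEulerian a d (n+1) ((k:ℤ)-1)
      = (-a + ((k:ℝ) + 1) * d) * genEulerian a d n ((k:ℤ)-1)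
        + (a + (((n:ℝ) + 1) - (k:ℝ)) * d) * genEulerian a d n ((k:ℤ)-2) := by
  rw [genEulerian, if_neg (by omega)]
  push_cast
  ring_nf

lemma key (a d : ℝ) (n k j : ℕ) (hk : k ≤ n) :
    (-a - k * d) * ((j + n + 1 - k).choose (n+1) : ℝ)
      + (a - ((n:ℝ) + 1 - k) * d) * ((j + n - k).choose (n+1) : ℝ)
    = -(a + j * d) * ((j + n - k).choose n : ℝ) := by
  rcases lt_or_ge j k with hj | hj
  · rw [Nat.choose_eq_zero_of_lt (show j + n - k < n by omega),
        Nat.choose_eq_zero_of_lt (show j + n - k < n + 1 by omega),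
        Nat.choose_eq_zero_of_lt (show j + n + 1 - k < n + 1 by omega)]
    ring
  · set m := j + n - k with hm
    have e1 : j + n + 1 - k = m + 1 := by omega
    have h1 : ((m+1).choose (n+1) : ℝ) = m.choose n + m.choose (n+1) := by
      exact_mod_cast Nat.choose_succ_succ m n
    have h2 : (m.choose (n+1) : ℝ) * ((n:ℝ)+1) = m.choose n * ((j:ℝ) - k) := by
      have h := Nat.choose_succ_right_eq m n
      have hmn : m - n = j - k := by omega
      rw [hmn] at h
      have := congrArg (Nat.cast : ℕ → ℝ) h
      push_cast [Nat.cast_sub hj] at this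
      linarith [this]
    rw [e1]
    linear_combination (-a - k*d) * h1 - d * h2

lemma worpitzky_s15 (a d : ℝ) (n : ℕ) : ∀ j : ℕ,
    (a + j * d) ^ n = (-1:ℝ)^n * ∑ k ∈ Finset.range (n+1),
      genEulerian (a-d) (-d) n ((k:ℤ)-1) * ((j + n - k).choose n : ℝ) := by
  induction n with
  | zero => intro j; simp [genEulerian]
  | succ n ih =>
    intro j
    have hrec : ∑ k ∈ Finset.range (n+2),
        genEulerian (a-d) (-d) (n+1) ((k:ℤ)-1) * ((j + (n+1) - k).choose (n+1) : ℝ)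
      = ∑ k ∈ Finset.range (n+2),
          ((-a - (k:ℝ)*d) * (genEulerian (a-d) (-d) n ((k:ℤ)-1) * ((j+n+1-k).choose (n+1):ℝ))
          + (a - ((n:ℝ)+2-(k:ℝ))*d) * (genEulerian (a-d) (-d) n ((k:ℤ)-2) * ((j+n+1-k).choose (n+1):ℝ))) := by
      refine Finset.sum_congr rfl fun k hk => ?_
      rw [Finset.mem_range] at hk
      rw [genEulerian_succ (a-d) (-d) n k (by omega)]
      have : j + (n+1) - k = j + n + 1 - k := by omega
      rw [this]; ring
    rw [hrec, Finset.sum_add_distrib]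
    -- first sum: last term vanishes
    rw [Finset.sum_range_succ (fun k => (-a - (k:ℝ)*d) * (genEulerian (a-d) (-d) n ((k:ℤ)-1) * ((j+n+1-k).choose (n+1):ℝ)))]
    rw [genEulerian_eq_zero (a-d) (-d) n (((n+1:ℕ):ℤ)-1) (Or.inl (by push_cast; omega))]
    -- second sum: shift index down, first term vanishes
    rw [Finset.sum_range_succ' (fun k => (a - ((n:ℝ)+2-(k:ℝ))*d) * (genEulerian (a-d) (-d) n ((k:ℤ)-2) * ((j+n+1-k).choose (n+1):ℝ))) (n+1)]
    rw [genEulerian_eq_zero (a-d) (-d) n (((0:ℕ):ℤ)-2) (Or.inr (by norm_num))]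
    have hcomb : ∑ k ∈ Finset.range (n+1),
          (-a - (k:ℝ)*d) * (genEulerian (a-d) (-d) n ((k:ℤ)-1) * ((j+n+1-k).choose (n+1):ℝ))
        + ∑ k ∈ Finset.range (n+1),
          (a - ((n:ℝ)+2-((k+1:ℕ):ℝ))*d) * (genEulerian (a-d) (-d) n (((k+1:ℕ):ℤ)-2) * ((j+n+1-(k+1)).choose (n+1):ℝ))
      = ∑ k ∈ Finset.range (n+1), genEulerian (a-d) (-d) n ((k:ℤ)-1)
          * (-(a + (j:ℝ)*d)) * ((j + n - k).choose n : ℝ) := by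
      rw [← Finset.sum_add_distrib]
      refine Finset.sum_congr rfl fun k hk => ?_
      rw [Finset.mem_range] at hk
      have e2 : (((k+1:ℕ):ℤ)-2) = (k:ℤ)-1 := by push_cast; ring
      have e3 : j + n + 1 - (k+1) = j + n - k := by omega
      rw [e2, e3]
      have hkey := key a d n k j (by omega)
      push_cast
      linear_combination (genEulerian (a-d) (-d) n ((k:ℤ)-1)) * hkey
    have hs : ∑ k ∈ Finset.range (n+1), genEulerian (a-d) (-d) n ((k:ℤ)-1)
          * (-(a + (j:ℝ)*d)) * ((j + n - k).choose n : ℝ)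
        = (-(a + (j:ℝ)*d)) * ∑ k ∈ Finset.range (n+1),
            genEulerian (a-d) (-d) n ((k:ℤ)-1) * ((j + n - k).choose n : ℝ) := by
      rw [Finset.mul_sum]; exact Finset.sum_congr rfl fun k _ => by ring
    simp only [mul_zero, zero_mul, add_zero]
    rw [hcomb, hs, pow_succ (a + (j:ℝ)*d) n, ih j, pow_succ (-1:ℝ) n]
    ring

lemma hasSum_shift (n k : ℕ) (hk : k ≤ n) (t : ℝ) (ht : |t| < 1) :
    HasSum (fun j : ℕ => t ^ j * ((j + n - k).choose n : ℝ)) (t ^ k / (1 - t) ^ (n + 1)) := by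
  have hb : HasSum (fun m : ℕ => ((m + n).choose n : ℝ) * t ^ m) (1 / (1 - t) ^ (n + 1)) :=
    hasSum_choose_mul_geometric_of_norm_lt_one n (by rwa [Real.norm_eq_abs])
  have h2 : HasSum (fun m : ℕ => t ^ (m + k) * (((m + k) + n - k).choose n : ℝ))
      (t ^ k * (1 / (1 - t) ^ (n + 1))) := by
    have h := hb.mul_left (t ^ k)
    have ef : (fun m : ℕ => t ^ (m + k) * (((m + k) + n - k).choose n : ℝ))
        = fun m : ℕ => t ^ k * (((m + n).choose n : ℝ) * t ^ m) := by
      funext m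
      have e : m + k + n - k = m + n := by omega
      rw [e, pow_add]; ring
    rw [ef]; exact h
  have h3 := (hasSum_nat_add_iff (f := fun j : ℕ => t ^ j * ((j + n - k).choose n : ℝ)) k).mp h2
  have h0 : ∑ i ∈ Finset.range k, t ^ i * ((i + n - k).choose n : ℝ) = 0 :=
    Finset.sum_eq_zero fun i hi => by
      rw [Finset.mem_range] at hi
      rw [Nat.choose_eq_zero_of_lt (by omega)]; simp
  rw [h0, add_zero] at h3
  rw [mul_one_div] at h3
  exact h3


/-- For `|t| < 1`, `∑_{j=0}^∞ t^j (a+jd)^n = -T_n(t, a-d, -d)/(t-1)^{n+1}`. -/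
theorem hasSum_genEulerianPoly (a d : ℝ) (n : ℕ) (t : ℝ) (ht : |t| < 1) :
    HasSum (fun j : ℕ => t ^ j * (a + (j : ℝ) * d) ^ n)
      (-(genEulerianPoly n t (a - d) (-d)) / (t - 1) ^ (n + 1)) := by
  have hsum : HasSum
      (fun j : ℕ => ∑ k ∈ Finset.range (n+1),
        ((-1:ℝ)^n * genEulerian (a-d) (-d) n ((k:ℤ)-1)) * (t^j * ((j + n - k).choose n : ℝ)))
      (∑ k ∈ Finset.range (n+1),
        ((-1:ℝ)^n * genEulerian (a-d) (-d) n ((k:ℤ)-1)) * (t^k / (1-t)^(n+1))) :=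
    hasSum_sum fun k hk =>
      (hasSum_shift n k (by rw [Finset.mem_range] at hk; omega) t ht).mul_left _
  have h1t : (1:ℝ) - t ≠ 0 := by
    intro h
    have : t = 1 := by linarith
    rw [this] at ht; norm_num at ht
  convert hsum using 1
  · funext j
    rw [worpitzky_s15 a d n j, Finset.mul_sum, Finset.mul_sum]
    exact Finset.sum_congr rfl fun k _ => by ring
  · unfold genEulerianPoly
    have hneg : (t-1)^(n+1) = (-1:ℝ)^(n+1) * (1-t)^(n+1) := by
      rw [← mul_pow]; ring_nf
    have hp : (-1:ℝ)^n * (-1:ℝ)^n = 1 := by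
      rw [← pow_add, ← two_mul, pow_mul]; norm_num
    have hR : ∑ k ∈ Finset.range (n+1),
          ((-1:ℝ)^n * genEulerian (a-d) (-d) n ((k:ℤ)-1)) * (t^k / (1-t)^(n+1))
        = ((-1:ℝ)^n * ∑ k ∈ Finset.range (n+1),
            genEulerian (a-d) (-d) n ((k:ℤ)-1) * t^k) / (1-t)^(n+1) := by
      rw [Finset.mul_sum, Finset.sum_div]
      exact Finset.sum_congr rfl fun k _ => by ring
    rw [hR, hneg, div_eq_div_iff
      (mul_ne_zero (pow_ne_zero _ (by norm_num)) (pow_ne_zero _ h1t)) (pow_ne_zero _ h1t)]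
    rw [pow_succ (-1:ℝ) n]
    set P := ∑ k ∈ Finset.range (n+1), genEulerian (a-d) (-d) n ((k:ℤ)-1) * t^k
    linear_combination (P * (1-t)^(n+1)) * hp
end
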